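/- Let I be a κ-complete ideal on a regular cardinal κ containing singletons, with I⁺ = P(κ) \ I. Define X(I) = {x ∈ (I⁺)^ω : ⋂_{n∈ω} x(n) ≠ ∅ and for all n ∈ ω, ⋂_{m<n} x(m) ∈ I⁺}, viewed as a subspace of the complete metric space (I⁺)^ω where I⁺ is discrete. If I is not precipitous, then X(I) is not a Baire space: there exists a nonempty open subset of X(I) that is meager in X(I). -/

import Mathlib

universe u

variable {α : Type u}

/-- `W` is an `I`-partition of `S`: a maximal family of `I`-positive subsets of `S`
that are pairwise almost disjoint modulo `I`. -/
def IsIPartition (I : Set (Set α)) (S : Set α) (W : Set (Set α)) : Prop :=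
  (∀ A ∈ W, A ⊆ S ∧ A ∉ I) ∧
  (∀ A ∈ W, ∀ B ∈ W, A ≠ B → A ∩ B ∈ I) ∧
  (∀ B : Set α, B ⊆ S → B ∉ I → ∃ A ∈ W, A ∩ B ∉ I)

/-- `W₁` refines `W₂`: every member of `W₁` is contained in some member of `W₂`. -/
def Refines (W₁ W₂ : Set (Set α)) : Prop :=
  ∀ A ∈ W₁, ∃ B ∈ W₂, A ⊆ B

/-- `I` is precipitous: every decreasing sequence of `I`-partitions of a set of
positive measure admits a decreasing choice sequence with nonempty intersection. -/
def Precipitous (I : Set (Set α)) : Prop :=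
  ∀ S : Set α, S ∉ I → ∀ W : ℕ → Set (Set α),
    (∀ n, IsIPartition I S (W n)) → (∀ n, Refines (W (n + 1)) (W n)) →
    ∃ A : ℕ → Set α, (∀ n, A n ∈ W n) ∧ (∀ n, A (n + 1) ⊆ A n) ∧
      (⋂ n, A n).Nonempty

/-- A finite descending refinement chain ending at `A ∈ W n`. -/
def GoodChain (W : ℕ → Set (Set α)) (n : ℕ) (A : Set α) : Prop :=
  ∃ C : ℕ → Set α, C n = A ∧ (∀ j, j ≤ n → C j ∈ W j) ∧ (∀ j, j < n → C (j + 1) ⊆ C j)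

theorem chain_mono {C : ℕ → Set α} {n : ℕ} (h : ∀ j, j < n → C (j + 1) ⊆ C j) :
    ∀ j j', j ≤ j' → j' ≤ n → C j' ⊆ C j := by
  intro j j' hjj'
  induction hjj' with
  | refl => intro _; exact subset_rfl
  | @step m hm ih =>
      intro hmn
      exact (h m (Nat.lt_of_succ_le hmn)).trans (ih (Nat.le_of_succ_le hmn))

theorem goodChain_of_mem {W : ℕ → Set (Set α)} (href : ∀ n, Refines (W (n + 1)) (W n)) :
    ∀ n A, A ∈ W n → GoodChain W n A := by
  intro n
  induction n with
  | zero =>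
      intro A hA
      refine ⟨fun _ => A, rfl, ?_, ?_⟩
      · intro j hj
        obtain rfl := Nat.le_zero.mp hj
        exact hA
      · intro j hj
        exact absurd hj (Nat.not_lt_zero j)
  | succ n ih =>
      intro A hA
      obtain ⟨B, hB, hAB⟩ := href n A hA
      obtain ⟨C, hCn, hCW, hCdec⟩ := ih B hB
      refine ⟨fun j => if j ≤ n then C j else A, by simp, ?_, ?_⟩
      · intro j hj
        by_cases h : j ≤ n
        · simpa [h] using hCW j h
        · have : j = n + 1 := by omega
          simpa [h, this] using hA
      · intro j hj
        have hjn : j ≤ n := Nat.lt_succ_iff.mp hj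
        by_cases h : j + 1 ≤ n
        · simpa [h, hjn] using hCdec j (by omega)
        · have : j = n := by omega
          subst this
          simpa [hjn, hCn] using hAB

theorem helper_XI_not_baire (I : Set (Set α))
    [ts : TopologicalSpace {s : Set α // s ∉ I}]
    (hdisc : DiscreteTopology {s : Set α // s ∉ I})
    (hempty : ∅ ∈ I)
    (hdown : ∀ A B : Set α, B ⊆ A → A ∈ I → B ∈ I)
    (hproper : Set.univ ∉ I)
    (hnprec : ¬ Precipitous I) :
    ∃ U : Set {x : ℕ → {s : Set α // s ∉ I} //
        (⋂ n, (x n : Set α)).Nonempty ∧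
        ∀ n : ℕ, (⋂ m ∈ Finset.range n, ((x m : Set α))) ∉ I},
      IsOpen U ∧ U.Nonempty ∧ IsMeagre U := by
  haveI := hdisc
  have hpos : ∀ {A B : Set α}, B ⊆ A → B ∉ I → A ∉ I :=
    fun h hB hA => hB (hdown _ _ h hA)
  have hne : ∀ {A : Set α}, A ∉ I → A.Nonempty := by
    intro A hA
    rw [Set.nonempty_iff_ne_empty]
    rintro rfl
    exact hA hempty
  rw [Precipitous] at hnprec
  push_neg at hnprec
  obtain ⟨S, hS, W, hWpart, hWref, hWbad⟩ := hnprec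
  set σS : {s : Set α // s ∉ I} := ⟨S, hS⟩ with hσS
  set E : ℕ → Set (ℕ → {s : Set α // s ∉ I}) := fun n =>
    {z | z 0 ≠ σS ∨ ∃ k A, GoodChain W n A ∧ (z k : Set α) ⊆ A} with hE
  have hEopen : ∀ n, IsOpen (E n) := by
    intro n
    have : E n = {z : ℕ → {s : Set α // s ∉ I} | z 0 ≠ σS} ∪
        ⋃ (k : ℕ), ⋃ (A : Set α), ⋃ (_ : GoodChain W n A),
          {z : ℕ → {s : Set α // s ∉ I} | (z k : Set α) ⊆ A} := by
      ext z
      simp only [hE, Set.mem_setOf_eq, Set.mem_union, Set.mem_iUnion, Set.mem_setOf_eq]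
      tauto
    rw [this]
    refine IsOpen.union ?_ ?_
    · have h0 : {z : ℕ → {s : Set α // s ∉ I} | z 0 ≠ σS} =
          (fun z : ℕ → {s : Set α // s ∉ I} => z 0) ⁻¹' {σS}ᶜ := rfl
      rw [h0]
      exact (isOpen_discrete _).preimage (continuous_apply 0)
    · refine isOpen_iUnion fun k => isOpen_iUnion fun A => isOpen_iUnion fun _ => ?_
      have h0 : {z : ℕ → {s : Set α // s ∉ I} | (z k : Set α) ⊆ A} =
          (fun z : ℕ → {s : Set α // s ∉ I} => z k) ⁻¹' {s | (s : Set α) ⊆ A} := rfl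
      rw [h0]
      exact (isOpen_discrete _).preimage (continuous_apply k)
  set D : ℕ → Set {x : ℕ → {s : Set α // s ∉ I} //
      (⋂ n, (x n : Set α)).Nonempty ∧
      ∀ n : ℕ, (⋂ m ∈ Finset.range n, ((x m : Set α))) ∉ I} :=
    fun n => Subtype.val ⁻¹' E n with hD
  have hDopen : ∀ n, IsOpen (D n) := fun n => (hEopen n).preimage continuous_subtype_val
  have hDdense : ∀ n, Dense (D n) := by
    intro n
    rw [dense_iff_inter_open]
    intro O hO ⟨x, hxO⟩
    rw [isOpen_induced_iff] at hO
    obtain ⟨V, hV, rfl⟩ := hO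
    by_cases hx0 : x.val 0 = σS
    · -- extend x into D n within the basic neighborhood
      obtain ⟨F, u, hu, hsub⟩ := isOpen_pi_iff.mp hV x.val hxO
      set k : ℕ := F.sup id + 1 with hk
      have hFk : ∀ i ∈ F, i < k := by
        intro i hi
        have := Finset.le_sup (f := id) hi
        simp only [id] at this
        omega
      set B : Set α := ⋂ m ∈ Finset.range k, (x.val m : Set α) with hBdef
      have hB : B ∉ I := x.2.2 k
      have hBsub : ∀ m ∈ Finset.range k, B ⊆ (x.val m : Set α) := by
        intro m hm
        exact Set.biInter_subset_of_mem hm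
      have hBS : B ⊆ S := by
        have h0 : (0 : ℕ) ∈ Finset.range k := by simp [hk]
        have := hBsub 0 h0
        rwa [hx0] at this
      obtain ⟨A, hAW, hABI⟩ := (hWpart n).2.2 B hBS hB
      set y : ℕ → {s : Set α // s ∉ I} :=
        fun m => if h : m < k then x.val m else ⟨A ∩ B, hABI⟩ with hy
      have hyk : ∀ m, ¬ m < k → (y m : Set α) = A ∩ B := by
        intro m hm; simp [hy, hm]
      have hABy : ∀ m, A ∩ B ⊆ (y m : Set α) := by
        intro m
        by_cases hm : m < k
        · have : (y m : Set α) = (x.val m : Set α) := by simp [hy, hm]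
          rw [this]
          exact Set.inter_subset_right.trans (hBsub m (Finset.mem_range.mpr hm))
        · rw [hyk m hm]
      have hyprop : (⋂ m, (y m : Set α)).Nonempty ∧
          ∀ j : ℕ, (⋂ m ∈ Finset.range j, ((y m : Set α))) ∉ I := by
        constructor
        · obtain ⟨a, ha⟩ := hne hABI
          exact ⟨a, Set.mem_iInter.mpr fun m => hABy m ha⟩
        · intro j
          exact hpos (Set.subset_iInter₂ fun m _ => hABy m) hABI
      refine ⟨⟨y, hyprop⟩, ?_, ?_⟩
      · -- membership in O
        show y ∈ V
        apply hsub
        intro i hi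
        have : y i = x.val i := by simp [hy, hFk i hi]
        rw [this]
        exact (hu i hi).2
      · -- membership in D n
        refine Or.inr ⟨k, A, goodChain_of_mem hWref n A hAW, ?_⟩
        rw [hyk k (lt_irrefl k)]
        exact Set.inter_subset_left
    · exact ⟨x, hxO, Or.inl hx0⟩
  set U : Set {x : ℕ → {s : Set α // s ∉ I} //
      (⋂ n, (x n : Set α)).Nonempty ∧
      ∀ n : ℕ, (⋂ m ∈ Finset.range n, ((x m : Set α))) ∉ I} :=
    {x | x.val 0 = σS} with hU
  have hinter : (⋂ n, D n) ⊆ Uᶜ := by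
    intro x hx hxU
    have hmem : ∀ n, x.val ∈ E n := fun n => Set.mem_iInter.mp hx n
    have hx0 : x.val 0 = σS := hxU
    have hsel : ∀ n, ∃ k A, GoodChain W n A ∧ (x.val k : Set α) ⊆ A := by
      intro n
      exact (hmem n).resolve_left (not_not_intro hx0)
    choose k A hGood hsubA using hsel
    choose C hCn hCW hCdec using hGood
    have hfin : ∀ K : ℕ, (⋂ m ∈ Finset.range K, (x.val m : Set α)) ∉ I := x.2.2
    have hxsub : ∀ n j, j ≤ n → (x.val (k n) : Set α) ⊆ C n j := by
      intro n j hjn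
      have h1 : C n n ⊆ C n j := chain_mono (hCdec n) j n hjn le_rfl
      rw [hCn n] at h1
      exact (hsubA n).trans h1
    have hkey : ∀ j n m, j ≤ n → j ≤ m → C n j = C m j := by
      intro j n m hjn hjm
      by_contra hne'
      have hI : C n j ∩ C m j ∈ I :=
        (hWpart j).2.1 _ (hCW n j hjn) _ (hCW m j hjm) hne'
      set K : ℕ := max (k n) (k m) + 1 with hK
      have hsub1 : (⋂ p ∈ Finset.range K, (x.val p : Set α)) ⊆ C n j ∩ C m j := by
        intro a ha
        have h1 : a ∈ (x.val (k n) : Set α) :=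
          Set.biInter_subset_of_mem (Finset.mem_range.mpr (by omega)) ha
        have h2 : a ∈ (x.val (k m) : Set α) :=
          Set.biInter_subset_of_mem (Finset.mem_range.mpr (by omega)) ha
        exact ⟨hxsub n j hjn h1, hxsub m j hjm h2⟩
      exact hfin K (hdown _ _ hsub1 hI)
    have hdec : ∀ j, C (j + 1) (j + 1) ⊆ C j j := by
      intro j
      have h1 : C (j + 1) (j + 1) ⊆ C (j + 1) j := hCdec (j + 1) j (Nat.lt_succ_self j)
      rw [hkey j (j + 1) j (Nat.le_succ j) le_rfl] at h1
      exact h1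
    have hmemint : (⋂ j, C j j).Nonempty := by
      obtain ⟨a, ha⟩ := x.2.1
      refine ⟨a, Set.mem_iInter.mpr fun j => ?_⟩
      have : a ∈ (x.val (k j) : Set α) := Set.mem_iInter.mp ha (k j)
      have h2 := hsubA j this
      rw [← hCn j] at h2
      exact h2
    have heq := hWbad (fun j => C j j) (fun j => hCW j j le_rfl) hdec
    rw [heq] at hmemint
    exact Set.not_nonempty_empty hmemint
  refine ⟨U, ?_, ?_, ?_⟩
  · have h0 : U = Subtype.val ⁻¹'
        ((fun z : ℕ → {s : Set α // s ∉ I} => z 0) ⁻¹' {σS}) := rfl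
    rw [h0]
    exact ((isOpen_discrete _).preimage (continuous_apply 0)).preimage
      continuous_subtype_val
  · refine ⟨⟨fun _ => σS, ?_, ?_⟩, rfl⟩
    · exact ⟨(hne hS).some, Set.mem_iInter.mpr fun _ => (hne hS).some_mem⟩
    · intro n
      exact hpos (Set.subset_iInter₂ fun m _ => subset_rfl) hS
  · have hres : (⋂ n, D n) ∈ residual _ :=
      (countable_iInter_mem).mpr fun n => residual_of_dense_open (hDopen n) (hDdense n)
    exact Filter.mem_of_superset hres hinter

theorem XI_not_baire_of_not_precipitous (I : Set (Set α))
    (hreg : (Cardinal.mk α).IsRegular)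
    (hempty : ∅ ∈ I)
    (hdown : ∀ A B : Set α, B ⊆ A → A ∈ I → B ∈ I)
    (hcomplete : ∀ s : Set (Set α), Cardinal.mk s < Cardinal.mk α →
      (∀ A ∈ s, A ∈ I) → ⋃₀ s ∈ I)
    (hsingle : ∀ a : α, {a} ∈ I)
    (hproper : Set.univ ∉ I)
    (hnprec : ¬ Precipitous I) :
    letI : TopologicalSpace {s : Set α // s ∉ I} := ⊥
    ∃ U : Set {x : ℕ → {s : Set α // s ∉ I} //
        (⋂ n, (x n : Set α)).Nonempty ∧
        ∀ n : ℕ, (⋂ m ∈ Finset.range n, ((x m : Set α))) ∉ I},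
      IsOpen U ∧ U.Nonempty ∧ IsMeagre U := by
  letI : TopologicalSpace {s : Set α // s ∉ I} := ⊥
  exact helper_XI_not_baire I ⟨rfl⟩ hempty hdown hproper hnprec
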